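/- Let a be an apportionment method for n parties satisfying quota, ex-ante proportionality, and threshold monotonicity. Define a rounding rule r as follows: for p ∈ [0,1)^n summing to an integer k ≥ 1, let r(p) be the distribution of the random set {i : α_i = 1} where α ∼ a(p, k) (taking the vote vector v := p and house size h := k, so that the standard quotas equal p and, by quota, α ∈ {0,1}^n with ∑_i α_i = k). Then r is a well-defined rounding rule and satisfies selection monotonicity. -/
import Mathlib


open Finset

/-- Party `i`'s standard quota `q_i = h·v_i / ∑_j v_j`. -/
noncomputable def stdQuota {n : ℕ} (v : Fin n → ℝ) (h : ℕ) (i : Fin n) : ℝ :=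
  (h : ℝ) * v i / ∑ j, v j

/-- An apportionment method: for every vote vector `v ∈ ℝ_{≥0}^n` with positive
total and house size `h`, `a v h` is a probability distribution over vectors
`α ∈ ℕ^n` summing to `h`. -/
def IsApportionment (n : ℕ) (a : (Fin n → ℝ) → ℕ → (Fin n → ℕ) → ℝ) : Prop :=
  ∀ (v : Fin n → ℝ) (h : ℕ), (∀ i, 0 ≤ v i) → 0 < ∑ j, v j →
    (∀ α, 0 ≤ a v h α) ∧
    (∑' α : Fin n → ℕ, a v h α = 1) ∧
    (∀ α : Fin n → ℕ, a v h α ≠ 0 → ∑ i, α i = h)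

/-- Quota: ex post, every party gets its lower or upper quota. -/
def SatisfiesQuota (n : ℕ) (a : (Fin n → ℝ) → ℕ → (Fin n → ℕ) → ℝ) : Prop :=
  ∀ (v : Fin n → ℝ) (h : ℕ), (∀ i, 0 ≤ v i) → 0 < ∑ j, v j →
    ∀ α : Fin n → ℕ, a v h α ≠ 0 →
      ∀ i, α i = ⌊stdQuota v h i⌋₊ ∨ α i = ⌈stdQuota v h i⌉₊

/-- Ex-ante proportionality: each party's expected number of seats equals its
standard quota. -/
def ExAnteProportional (n : ℕ) (a : (Fin n → ℝ) → ℕ → (Fin n → ℕ) → ℝ) : Prop :=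
  ∀ (v : Fin n → ℝ) (h : ℕ), (∀ i, 0 ≤ v i) → 0 < ∑ j, v j →
    ∀ i, ∑' α : Fin n → ℕ, a v h α * (α i : ℝ) = stdQuota v h i

/-- Full support: every apportionment vector satisfying quota receives positive
probability. -/
def FullSupport (n : ℕ) (a : (Fin n → ℝ) → ℕ → (Fin n → ℕ) → ℝ) : Prop :=
  ∀ (v : Fin n → ℝ) (h : ℕ), (∀ i, 0 ≤ v i) → 0 < ∑ j, v j →
    ∀ α : Fin n → ℕ, (∑ i, α i = h) →
      (∀ i, α i = ⌊stdQuota v h i⌋₊ ∨ α i = ⌈stdQuota v h i⌉₊) → 0 < a v h α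

/-- Threshold monotonicity of an apportionment method. -/
def ThresholdMonotone (n : ℕ) (a : (Fin n → ℝ) → ℕ → (Fin n → ℕ) → ℝ) : Prop :=
  ∀ (v v' : Fin n → ℝ) (h : ℕ),
    (∀ i, 0 ≤ v i) → 0 < ∑ j, v j → (∀ i, 0 ≤ v' i) → 0 < ∑ j, v' j →
    ∀ T : Finset (Fin n),
      (∀ i ∈ T, stdQuota v h i ≤ stdQuota v' h i) →
      (∀ i ∉ T, stdQuota v' h i ≤ stdQuota v h i) →
      ∀ θ : ℕ,
        (∑' α : Fin n → ℕ, if θ ≤ ∑ i ∈ T, α i then a v h α else 0) ≤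
          ∑' α : Fin n → ℕ, if θ ≤ ∑ i ∈ T, α i then a v' h α else 0

/-- The rounding rule induced by an apportionment method: run the method on
vote vector `p` and house size `k`, and return the set of parties receiving a
seat. `inducedRule a p k A` is the probability that this set equals `A`. -/
noncomputable def inducedRule {n : ℕ} (a : (Fin n → ℝ) → ℕ → (Fin n → ℕ) → ℝ)
    (p : Fin n → ℝ) (k : ℕ) (A : Finset (Fin n)) : ℝ :=
  ∑' α : Fin n → ℕ, if univ.filter (fun i => α i = 1) = A then a p k α else 0

section AuxLemmas

variable {n : ℕ}

lemma stdQuota_eq_self (p : Fin n → ℝ) (k : ℕ) (hk : 1 ≤ k)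
    (hs : ∑ i, p i = (k : ℝ)) (i : Fin n) : stdQuota p k i = p i := by
  have hk0 : (k : ℝ) ≠ 0 := Nat.cast_ne_zero.mpr (by omega)
  unfold stdQuota
  rw [hs, mul_comm, mul_div_assoc, div_self hk0, mul_one]

lemma sumPos (p : Fin n → ℝ) (k : ℕ) (hk : 1 ≤ k) (hs : ∑ i, p i = (k : ℝ)) :
    0 < ∑ j, p j := by
  rw [hs]; exact_mod_cast Nat.lt_of_lt_of_le Nat.zero_lt_one hk

lemma supp_le_one (a : (Fin n → ℝ) → ℕ → (Fin n → ℕ) → ℝ)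
    (h2 : SatisfiesQuota n a) (p : Fin n → ℝ) (k : ℕ) (hk : 1 ≤ k)
    (hp : ∀ i, 0 ≤ p i ∧ p i < 1) (hs : ∑ i, p i = (k : ℝ))
    (α : Fin n → ℕ) (hα : a p k α ≠ 0) : ∀ i, α i ≤ 1 := by
  intro i
  rcases h2 p k (fun i => (hp i).1) (sumPos p k hk hs) α hα i with h | h
  · rw [h, stdQuota_eq_self p k hk hs, Nat.floor_eq_zero.mpr (hp i).2]
    omega
  · rw [h, stdQuota_eq_self p k hk hs]
    exact Nat.ceil_le.mpr (by exact_mod_cast (hp i).2.le)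

lemma summable_a (a : (Fin n → ℝ) → ℕ → (Fin n → ℕ) → ℝ)
    (h1 : IsApportionment n a) (p : Fin n → ℝ) (k : ℕ)
    (hp0 : ∀ i, 0 ≤ p i) (hpos : 0 < ∑ j, p j) : Summable (a p k) := by
  by_contra h
  have := (h1 p k hp0 hpos).2.1
  rw [tsum_eq_zero_of_not_summable h] at this
  norm_num at this

lemma summable_ite (a : (Fin n → ℝ) → ℕ → (Fin n → ℕ) → ℝ)
    (h1 : IsApportionment n a) (p : Fin n → ℝ) (k : ℕ)
    (hp0 : ∀ i, 0 ≤ p i) (hpos : 0 < ∑ j, p j)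
    (c : (Fin n → ℕ) → Prop) [DecidablePred c] :
    Summable (fun α => if c α then a p k α else 0) := by
  refine Summable.of_nonneg_of_le (fun α => ?_) (fun α => ?_)
    (summable_a a h1 p k hp0 hpos)
  · split
    · exact (h1 p k hp0 hpos).1 α
    · exact le_rfl
  · split
    · exact le_rfl
    · exact (h1 p k hp0 hpos).1 α

lemma filter_eq_iff (α : Fin n → ℕ) (T : Finset (Fin n)) (k : ℕ)
    (hT : T.card = k) (hle : ∀ i, α i ≤ 1) (hsum : ∑ i, α i = k) :
    (univ.filter (fun i => α i = 1) = T) ↔ (k ≤ ∑ i ∈ T, α i) := by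
  constructor
  · intro h
    have hall : ∀ i ∈ T, α i = 1 := by
      intro i hi
      rw [← h] at hi
      exact (Finset.mem_filter.mp hi).2
    calc k = T.card := hT.symm
      _ = ∑ i ∈ T, 1 := by simp
      _ ≤ ∑ i ∈ T, α i := Finset.sum_le_sum (fun i hi => (hall i hi).ge)
  · intro h
    have hle2 : ∑ i ∈ T, α i ≤ ∑ i, α i :=
      Finset.sum_le_sum_of_subset (Finset.subset_univ T)
    have heq : ∑ i ∈ T, α i = k := le_antisymm (hsum ▸ hle2) h
    have hall : ∀ i ∈ T, α i = 1 := by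
      by_contra hcon
      push_neg at hcon
      obtain ⟨j, hj, hj1⟩ := hcon
      have : ∑ i ∈ T, α i < ∑ i ∈ T, 1 :=
        Finset.sum_lt_sum (fun i _ => hle i) ⟨j, hj, by have := hle j; omega⟩
      simp only [Finset.sum_const, smul_eq_mul, mul_one] at this
      omega
    have hout : ∀ i ∉ T, α i = 0 := by
      have hsd : ∑ i ∈ univ \ T, α i + ∑ i ∈ T, α i = ∑ i, α i :=
        Finset.sum_sdiff (Finset.subset_univ T)
      have hzero : ∑ i ∈ univ \ T, α i = 0 := by omega
      intro i hi
      exact Finset.sum_eq_zero_iff.mp hzero i (by simp [hi])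
    ext i
    simp only [Finset.mem_filter, Finset.mem_univ, true_and]
    constructor
    · intro h1
      by_contra hi
      exact absurd h1 (by rw [hout i hi]; omega)
    · exact hall i

end AuxLemmas

/-- The rounding rule induced by a threshold monotone apportionment method
(satisfying quota and ex-ante proportionality) is a well-defined rounding rule
and satisfies selection monotonicity. -/
theorem induced_rounding_rule_selection_monotone {n : ℕ}
    (a : (Fin n → ℝ) → ℕ → (Fin n → ℕ) → ℝ)
    (h1 : IsApportionment n a) (h2 : SatisfiesQuota n a)
    (h3 : ExAnteProportional n a) (h4 : ThresholdMonotone n a) :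
    (∀ (p : Fin n → ℝ) (k : ℕ), 1 ≤ k →
      (∀ i, 0 ≤ p i ∧ p i < 1) → (∑ i, p i = (k : ℝ)) →
      (∀ A : Finset (Fin n), 0 ≤ inducedRule a p k A) ∧
      (∑ A : Finset (Fin n), inducedRule a p k A = 1) ∧
      (∀ A : Finset (Fin n), inducedRule a p k A ≠ 0 → A.card = k) ∧
      (∀ i : Fin n,
        ∑ A ∈ (univ : Finset (Finset (Fin n))).filter (fun A => i ∈ A),
          inducedRule a p k A = p i)) ∧
    (∀ (k : ℕ), 1 ≤ k → ∀ (p p' : Fin n → ℝ),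
      (∀ i, 0 ≤ p i ∧ p i < 1) → (∀ i, 0 ≤ p' i ∧ p' i < 1) →
      (∑ i, p i = (k : ℝ)) → (∑ i, p' i = (k : ℝ)) →
      ∀ T : Finset (Fin n), T.card = k →
        (∀ i ∈ T, p i ≤ p' i) → (∀ i ∉ T, p' i ≤ p i) →
        inducedRule a p k T ≤ inducedRule a p' k T) := by
  constructor
  · -- well-definedness
    intro p k hk hp hs
    have hp0 : ∀ i, 0 ≤ p i := fun i => (hp i).1
    have hpos : 0 < ∑ j, p j := sumPos p k hk hs
    have hsummable : ∀ A : Finset (Fin n),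
        Summable (fun α : Fin n → ℕ =>
          if univ.filter (fun i => α i = 1) = A then a p k α else 0) :=
      fun A => summable_ite a h1 p k hp0 hpos _
    refine ⟨?_, ?_, ?_, ?_⟩
    · -- nonnegativity
      intro A
      refine tsum_nonneg (fun α => ?_)
      split
      · exact (h1 p k hp0 hpos).1 α
      · exact le_rfl
    · -- probabilities sum to one
      unfold inducedRule
      rw [← Summable.tsum_finsetSum (fun A _ => hsummable A)]
      rw [tsum_congr (fun α => by
        simp [Finset.sum_ite_eq] :
        ∀ α : Fin n → ℕ, (∑ A : Finset (Fin n),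
          if univ.filter (fun i => α i = 1) = A then a p k α else 0) = a p k α)]
      exact (h1 p k hp0 hpos).2.1
    · -- support on k-element sets
      intro A hA
      have hex : ∃ α : Fin n → ℕ,
          (if univ.filter (fun i => α i = 1) = A then a p k α else 0) ≠ 0 := by
        by_contra hcon
        push_neg at hcon
        exact hA ((tsum_congr hcon).trans tsum_zero)
      obtain ⟨α, hα⟩ := hex
      by_cases hc : univ.filter (fun i => α i = 1) = A
      · rw [if_pos hc] at hα
        have hle := supp_le_one a h2 p k hk hp hs α hα
        have hsumα := (h1 p k hp0 hpos).2.2 α hα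
        rw [← hc, Finset.card_filter, ← hsumα]
        refine Finset.sum_congr rfl (fun i _ => ?_)
        rcases Nat.le_one_iff_eq_zero_or_eq_one.mp (hle i) with h0 | h0 <;>
          simp [h0]
      · rw [if_neg hc] at hα
        exact absurd rfl hα
    · -- correct marginals
      intro i
      unfold inducedRule
      rw [← Summable.tsum_finsetSum (fun A _ => hsummable A)]
      have heq : ∀ α : Fin n → ℕ,
          (∑ A ∈ (univ : Finset (Finset (Fin n))).filter (fun A => i ∈ A),
            if univ.filter (fun j => α j = 1) = A then a p k α else 0)
            = a p k α * (α i : ℝ) := by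
        intro α
        rw [Finset.sum_ite_eq]
        by_cases hα : a p k α = 0
        · simp [hα]
        · have hle := supp_le_one a h2 p k hk hp hs α hα
          rcases Nat.le_one_iff_eq_zero_or_eq_one.mp (hle i) with h0 | h0 <;>
            simp [Finset.mem_filter, h0]
      rw [tsum_congr heq, h3 p k hp0 hpos i, stdQuota_eq_self p k hk hs]
  · -- selection monotonicity
    intro k hk p p' hp hp' hs hs' T hT hTmono hTmono'
    have hp0 : ∀ i, 0 ≤ p i := fun i => (hp i).1
    have hp0' : ∀ i, 0 ≤ p' i := fun i => (hp' i).1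
    have hpos : 0 < ∑ j, p j := sumPos p k hk hs
    have hpos' : 0 < ∑ j, p' j := sumPos p' k hk hs'
    have key : ∀ q : Fin n → ℝ, (∀ i, 0 ≤ q i ∧ q i < 1) → ∑ i, q i = (k : ℝ) →
        inducedRule a q k T =
          ∑' α : Fin n → ℕ, if k ≤ ∑ i ∈ T, α i then a q k α else 0 := by
      intro q hq hqs
      unfold inducedRule
      refine tsum_congr (fun α => ?_)
      by_cases hα : a q k α = 0
      · simp [hα]
      · have hle := supp_le_one a h2 q k hk hq hqs α hα
        have hsumα := (h1 q k (fun i => (hq i).1) (sumPos q k hk hqs)).2.2 α hα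
        rw [if_congr (filter_eq_iff α T k hT hle hsumα) rfl rfl]
    rw [key p hp hs, key p' hp' hs']
    refine h4 p p' k hp0 hpos hp0' hpos' T ?_ ?_ k
    · intro i hi
      rw [stdQuota_eq_self p k hk hs, stdQuota_eq_self p' k hk hs']
      exact hTmono i hi
    · intro i hi
      rw [stdQuota_eq_self p k hk hs, stdQuota_eq_self p' k hk hs']
      exact hTmono' i hi
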